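/- Let ε ∈ (0, 1/4) and X_ε = {(x,y) ∈ (-1,1)² : xy = ε}. Suppose f : (0,1) → X_ε is a real-analytic map which extends holomorphically to the complex 1-neighborhood N₁(0,1) of (0,1) with both coordinates bounded by 2 in absolute value there. Then the image of the x-coordinate π∘f((0,1)) has hyperbolic diameter at most an absolute constant C (independent of ε) in the annulus A(ε/2, 2) = {ε/2 < |x| < 2}. -/

import Mathlib

open Set UpperHalfPlane

/-- `p : ℍ → ℂ` is a holomorphic covering map onto the plane domain `S`:
it takes values in `S`, is surjective onto `S`, holomorphic, and a covering
map onto `S`.  The Poincaré metric on `ℍ` then descends to `S`. -/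
def IsHolomorphicCoveringOnto (p : UpperHalfPlane → ℂ) (S : Set ℂ) : Prop :=
  ∃ h : ∀ z, p z ∈ S,
    Function.Surjective (Set.codRestrict p S h) ∧
    (∃ P : ℂ → ℂ, DifferentiableOn ℂ P {z : ℂ | 0 < z.im} ∧
      ∀ z : UpperHalfPlane, P ↑z = p z) ∧
    IsCoveringMap (Set.codRestrict p S h)

/-- The hyperbolic distance on a domain covered by `p : ℍ → ℂ`: the infimum of
hyperbolic distances between preimages.  (Here `ℍ` carries its Poincaré
metric.) -/
noncomputable def hypDist (p : UpperHalfPlane → ℂ) (x y : ℂ) : ℝ :=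
  sInf {d | ∃ z w : UpperHalfPlane, p z = x ∧ p w = y ∧ d = dist z w}

/-- The annulus `{z : ℂ | a < |z| < b}`. -/
def Annulus (a b : ℝ) : Set ℂ := {z : ℂ | a < ‖z‖ ∧ ‖z‖ < b}

/-- The complex `1`-neighborhood of the interval `(0,1)`. -/
def NbhdOne : Set ℂ := {z : ℂ | ∃ t ∈ Set.Ioo (0:ℝ) 1, dist z (t : ℂ) < 1}


namespace OmegaAux
open Topology Filter Metric Complex

noncomputable section

/-- Closed axis-parallel rectangle in `ℂ`. -/
def Rect (a b c d : ℝ) : Set ℂ := {z | z.re ∈ Icc a b ∧ z.im ∈ Icc c d}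

lemma mem_rect {a b c d : ℝ} {z : ℂ} :
    z ∈ Rect a b c d ↔ (a ≤ z.re ∧ z.re ≤ b) ∧ (c ≤ z.im ∧ z.im ≤ d) := by
  simp [Rect, mem_Icc]

lemma rect_subset_rect {a b b' c d : ℝ} (h : b ≤ b') :
    Rect a b c d ⊆ Rect a b' c d := by
  intro z hz; rw [mem_rect] at hz ⊢
  exact ⟨⟨hz.1.1, hz.1.2.trans h⟩, hz.2⟩

lemma convex_rect (a b c d : ℝ) : Convex ℝ (Rect a b c d) := by
  have h1 : Rect a b c d = Complex.reLm ⁻¹' (Icc a b) ∩ Complex.imLm ⁻¹' (Icc c d) := rfl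
  rw [h1]
  exact ((convex_Icc a b).linear_preimage _).inter ((convex_Icc c d).linear_preimage _)

lemma isPreconnected_rect (a b c d : ℝ) : IsPreconnected (Rect a b c d) :=
  (convex_rect a b c d).isPreconnected

lemma isClosed_rect (a b c d : ℝ) : IsClosed (Rect a b c d) := by
  have h1 : Rect a b c d = Complex.re ⁻¹' (Icc a b) ∩ Complex.im ⁻¹' (Icc c d) := rfl
  rw [h1]
  exact (isClosed_Icc.preimage Complex.continuous_re).inter
    (isClosed_Icc.preimage Complex.continuous_im)

lemma isCompact_rect (a b c d : ℝ) : IsCompact (Rect a b c d) := by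
  refine Metric.isCompact_of_isClosed_isBounded (isClosed_rect a b c d) ?_
  refine (Metric.isBounded_closedBall (x := (0:ℂ))
    (r := (|a|+|b|) + (|c|+|d|))).subset ?_
  intro z hz
  rw [mem_rect] at hz
  rw [Metric.mem_closedBall, Complex.dist_eq, sub_zero]
  calc ‖z‖ ≤ |z.re| + |z.im| := Complex.norm_le_abs_re_add_abs_im z
  _ ≤ (|a|+|b|) + (|c|+|d|) := by
      rcases hz with ⟨⟨h1, h2⟩, h3, h4⟩
      have e1 : |z.re| ≤ |a| + |b| := by
        rw [abs_le]
        constructor <;> nlinarith [neg_abs_le a, le_abs_self b, abs_nonneg a, abs_nonneg b]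
      have e2 : |z.im| ≤ |c| + |d| := by
        rw [abs_le]
        constructor <;> nlinarith [neg_abs_le c, le_abs_self d, abs_nonneg c, abs_nonneg d]
      exact add_le_add e1 e2

section Lift

variable {E X : Type*} [TopologicalSpace E] [TopologicalSpace X] {q : E → X}

/-- `V` is an evenly covered open set: through every point of `q ⁻¹' V` there is a
continuous section of `q` defined on all of `V`. -/
def HasSec (q : E → X) (V : Set X) : Prop :=
  IsOpen V ∧ ∀ e₀ : E, q e₀ ∈ V → ∃ σ : X → E,
    ContinuousOn σ V ∧ (∀ y ∈ V, q (σ y) = y) ∧ σ (q e₀) = e₀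

lemma exists_hasSec (hq : IsCoveringMap q) (x : X) :
    ∃ V : Set X, x ∈ V ∧ HasSec q V := by
  by_cases hne : Nonempty (q ⁻¹' {x})
  · set e := (hq x).toTrivialization with he
    have hx : x ∈ e.baseSet := (hq x).mem_toTrivialization_baseSet
    refine ⟨e.baseSet, hx, e.open_baseSet, ?_⟩
    intro e₀ he₀
    have hsrc : e₀ ∈ e.source := e.mem_source.2 he₀
    refine ⟨fun y => e.toOpenPartialHomeomorph.symm (y, (e e₀).2), ?_, ?_, ?_⟩
    · refine e.toOpenPartialHomeomorph.continuousOn_symm.comp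
        (continuous_id.prodMk continuous_const).continuousOn ?_
      intro y hy
      rw [e.target_eq]
      exact ⟨hy, trivial⟩
    · intro y hy
      exact e.proj_symm_apply (by rw [e.target_eq]; exact ⟨hy, trivial⟩)
    · have h2 : ((q e₀ : X), (e e₀).2) = e e₀ := Prod.ext (e.coe_fst hsrc).symm rfl
      show e.toOpenPartialHomeomorph.symm ((q e₀ : X), (e e₀).2) = e₀
      rw [h2]
      exact e.toOpenPartialHomeomorph.left_inv hsrc
  · obtain ⟨hd, U, hxU, hU, hfU, H, hH⟩ := hq x
    exact ⟨U, hxU, hU, fun e₀ he₀ => (hne ⟨(H ⟨e₀, he₀⟩).2⟩).elim⟩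

/-- Gluing two partial continuous maps along a line. -/
lemma glue_on {h h' : ℂ → E} {A B : Set ℂ} {τ : ℝ} {pr : ℂ → ℝ} (hpr : Continuous pr)
    (hsubA : ∀ z, z ∈ A ∪ B → pr z ≤ τ → z ∈ A)
    (hsubB : ∀ z, z ∈ A ∪ B → τ ≤ pr z → z ∈ B)
    (hcA : ContinuousOn h A) (hcB : ContinuousOn h' B)
    (heq : EqOn h h' (A ∩ B)) :
    ∃ H : ℂ → E, ContinuousOn H (A ∪ B) ∧ EqOn H h A ∧ EqOn H h' B := by
  classical
  have hcl1 : closure {z : ℂ | pr z ≤ τ} ⊆ {z : ℂ | pr z ≤ τ} :=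
    (isClosed_le hpr continuous_const).closure_subset
  have hcl2 : closure {z : ℂ | ¬ pr z ≤ τ} ⊆ {z : ℂ | τ ≤ pr z} := by
    refine closure_minimal ?_ (isClosed_le continuous_const hpr)
    intro z hz
    exact le_of_lt (lt_of_not_ge hz)
  have hfr : frontier {z : ℂ | pr z ≤ τ} ⊆ {z : ℂ | pr z ≤ τ} ∩ {z : ℂ | τ ≤ pr z} := by
    rw [frontier_eq_closure_inter_closure]
    intro z hz
    exact ⟨hcl1 hz.1, hcl2 hz.2⟩
  refine ⟨fun z => if pr z ≤ τ then h z else h' z, ?_, ?_, ?_⟩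
  · refine ContinuousOn.if ?_ ?_ ?_
    · intro z hz
      have h1 := hfr hz.2
      exact heq ⟨hsubA z hz.1 h1.1, hsubB z hz.1 h1.2⟩
    · refine hcA.mono ?_
      intro z hz
      exact hsubA z hz.1 (hcl1 hz.2)
    · refine hcB.mono ?_
      intro z hz
      exact hsubB z hz.1 (hcl2 hz.2)
  · intro z hz
    by_cases hle : pr z ≤ τ
    · simp [hle]
    · have hzB : z ∈ B := hsubB z (Or.inl hz) (le_of_lt (lt_of_not_ge hle))
      simp only [hle, if_false]
      exact (heq ⟨hz, hzB⟩).symm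
  · intro z hz
    by_cases hle : pr z ≤ τ
    · have hzA : z ∈ A := hsubA z (Or.inr hz) hle
      simp only [hle, if_true]
      exact heq ⟨hzA, hz⟩
    · simp [hle]

lemma strip_lift (hq : IsCoveringMap q) {g : ℂ → X} (x : ℕ → ℝ) (hx : Monotone x)
    {c d : ℝ} (hcd : c ≤ d) (n : ℕ) (hn : 0 < n)
    (hcell : ∀ i, i < n → ∃ V, HasSec q V ∧ ∀ z ∈ Rect (x i) (x (i+1)) c d, g z ∈ V)
    (hg : ContinuousOn g (Rect (x 0) (x n) c d))
    {e₀ : E} (he₀ : q e₀ = g (⟨x 0, c⟩ : ℂ)) :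
    ∃ h : ℂ → E, ContinuousOn h (Rect (x 0) (x n) c d) ∧
      (∀ z ∈ Rect (x 0) (x n) c d, q (h z) = g z) ∧ h (⟨x 0, c⟩ : ℂ) = e₀ := by
  suffices H : ∀ i, 1 ≤ i → i ≤ n → ∃ h : ℂ → E, ContinuousOn h (Rect (x 0) (x i) c d) ∧
      (∀ z ∈ Rect (x 0) (x i) c d, q (h z) = g z) ∧ h (⟨x 0, c⟩ : ℂ) = e₀ by
    exact H n hn le_rfl
  intro i hi
  induction i, hi using Nat.le_induction with
  | base =>
    intro h1n
    obtain ⟨V, ⟨hVo, hVsec⟩, hVmap⟩ := hcell 0 hn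
    have hcorner : (⟨x 0, c⟩ : ℂ) ∈ Rect (x 0) (x 1) c d := by
      rw [mem_rect]
      exact ⟨⟨le_rfl, hx (Nat.zero_le 1)⟩, le_rfl, hcd⟩
    obtain ⟨σ, hσc, hσq, hσe⟩ := hVsec e₀ (by rw [he₀]; exact hVmap _ hcorner)
    refine ⟨σ ∘ g, hσc.comp (hg.mono (rect_subset_rect (hx h1n))) hVmap, ?_, ?_⟩
    · intro z hz
      exact hσq _ (hVmap z hz)
    · show σ (g (⟨x 0, c⟩ : ℂ)) = e₀
      rw [← he₀, hσe]
  | succ i hi IH =>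
    intro hin
    obtain ⟨h, hhc, hhq, hhe⟩ := IH (le_trans (Nat.le_succ i) hin)
    obtain ⟨V, ⟨hVo, hVsec⟩, hVmap⟩ := hcell i (lt_of_lt_of_le (Nat.lt_succ_self i) hin)
    set A := Rect (x 0) (x i) c d with hA
    set B := Rect (x i) (x (i+1)) c d with hB
    have hx0i : x 0 ≤ x i := hx (Nat.zero_le i)
    have hxii : x i ≤ x (i+1) := hx (Nat.le_succ i)
    have hcorner₁A : (⟨x i, c⟩ : ℂ) ∈ A := by
      rw [hA, mem_rect]; exact ⟨⟨hx0i, le_rfl⟩, le_rfl, hcd⟩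
    have hcorner₁B : (⟨x i, c⟩ : ℂ) ∈ B := by
      rw [hB, mem_rect]; exact ⟨⟨le_rfl, hxii⟩, le_rfl, hcd⟩
    set e₁ := h (⟨x i, c⟩ : ℂ) with he₁
    obtain ⟨σ, hσc, hσq, hσe⟩ := hVsec e₁ (by rw [hhq _ hcorner₁A]; exact hVmap _ hcorner₁B)
    have hBsub : B ⊆ Rect (x 0) (x n) c d := by
      intro z hz
      rw [hB, mem_rect] at hz
      rw [mem_rect]
      exact ⟨⟨le_trans hx0i hz.1.1, le_trans hz.1.2 (hx hin)⟩, hz.2⟩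
    have hAsub : A ⊆ Rect (x 0) (x n) c d :=
      rect_subset_rect (hx (le_trans (Nat.le_succ i) hin))
    have hh'c : ContinuousOn (σ ∘ g) B := hσc.comp (hg.mono hBsub) hVmap
    have hh'q : ∀ z ∈ B, q ((σ ∘ g) z) = g z := fun z hz => hσq _ (hVmap z hz)
    have hh'e : (σ ∘ g) (⟨x i, c⟩ : ℂ) = e₁ := by
      show σ (g (⟨x i, c⟩ : ℂ)) = e₁
      rw [← hhq _ hcorner₁A, hσe]
    have hAB : A ∩ B = Rect (x i) (x i) c d := by
      ext z
      rw [mem_inter_iff, hA, hB, mem_rect, mem_rect, mem_rect]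
      constructor
      · rintro ⟨⟨⟨e1, e2⟩, e3⟩, ⟨f1, f2⟩, f3⟩
        exact ⟨⟨f1, e2⟩, e3⟩
      · rintro ⟨⟨e1, e2⟩, e3⟩
        exact ⟨⟨⟨le_trans hx0i e1, e2⟩, e3⟩, ⟨e1, le_trans e2 hxii⟩, e3⟩
    have heqAB : EqOn h (σ ∘ g) (A ∩ B) := by
      rw [hAB]
      have hsubA' : Rect (x i) (x i) c d ⊆ A := by
        intro z hz
        rw [mem_rect] at hz
        rw [hA, mem_rect]
        exact ⟨⟨le_trans hx0i hz.1.1, hz.1.2⟩, hz.2⟩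
      have hsubB' : Rect (x i) (x i) c d ⊆ B := by
        intro z hz
        rw [mem_rect] at hz
        rw [hB, mem_rect]
        exact ⟨⟨hz.1.1, le_trans hz.1.2 hxii⟩, hz.2⟩
      refine hq.eqOn_of_comp_eqOn (isPreconnected_rect _ _ _ _)
        (hhc.mono hsubA') (hh'c.mono hsubB') ?_
        (a := (⟨x i, c⟩ : ℂ)) ?_ ?_
      · intro z hz
        show q (h z) = q ((σ ∘ g) z)
        rw [hhq _ (hsubA' hz), hh'q _ (hsubB' hz)]
      · rw [mem_rect]
        exact ⟨⟨le_rfl, le_rfl⟩, le_rfl, hcd⟩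
      · rw [hh'e]
    obtain ⟨H, hHc, hHA, hHB⟩ := glue_on (pr := Complex.re) (τ := x i)
      Complex.continuous_re
      (fun z hz hle => by
        rcases hz with hz | hz
        · exact hz
        · rw [hB, mem_rect] at hz
          rw [hA, mem_rect]
          exact ⟨⟨le_trans hx0i hz.1.1, hle⟩, hz.2⟩)
      (fun z hz hle => by
        rcases hz with hz | hz
        · rw [hA, mem_rect] at hz
          rw [hB, mem_rect]
          exact ⟨⟨hle, le_trans hz.1.2 hxii⟩, hz.2⟩
        · exact hz)
      hhc hh'c heqAB
    have hunion : A ∪ B = Rect (x 0) (x (i+1)) c d := by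
      ext z
      rw [mem_union, hA, hB, mem_rect, mem_rect, mem_rect]
      constructor
      · rintro (⟨⟨e1, e2⟩, e3⟩ | ⟨⟨e1, e2⟩, e3⟩)
        · exact ⟨⟨e1, le_trans e2 hxii⟩, e3⟩
        · exact ⟨⟨le_trans hx0i e1, e2⟩, e3⟩
      · rintro ⟨⟨e1, e2⟩, e3⟩
        rcases le_total z.re (x i) with hle | hle
        · exact Or.inl ⟨⟨e1, hle⟩, e3⟩
        · exact Or.inr ⟨⟨hle, e2⟩, e3⟩
    refine ⟨H, ?_, ?_, ?_⟩
    · rw [← hunion]; exact hHc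
    · intro z hz
      rw [← hunion] at hz
      rcases hz with hz | hz
      · rw [hHA hz]; exact hhq _ hz
      · rw [hHB hz]; exact hh'q _ hz
    · have hc0A : (⟨x 0, c⟩ : ℂ) ∈ A := by
        rw [hA, mem_rect]; exact ⟨⟨le_rfl, hx0i⟩, le_rfl, hcd⟩
      rw [hHA hc0A, hhe]

lemma rect_lift_grid (hq : IsCoveringMap q) {g : ℂ → X} (x y : ℕ → ℝ)
    (hx : Monotone x) (hy : Monotone y) (n m : ℕ) (hn : 0 < n) (hm : 0 < m)
    (hcell : ∀ i j, i < n → j < m →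
      ∃ V, HasSec q V ∧ ∀ z ∈ Rect (x i) (x (i+1)) (y j) (y (j+1)), g z ∈ V)
    (hg : ContinuousOn g (Rect (x 0) (x n) (y 0) (y m)))
    {e₀ : E} (he₀ : q e₀ = g (⟨x 0, y 0⟩ : ℂ)) :
    ∃ h : ℂ → E, ContinuousOn h (Rect (x 0) (x n) (y 0) (y m)) ∧
      (∀ z ∈ Rect (x 0) (x n) (y 0) (y m), q (h z) = g z) := by
  have hx0n : x 0 ≤ x n := hx (Nat.zero_le n)
  suffices H : ∀ j, 1 ≤ j → j ≤ m → ∃ h : ℂ → E, ContinuousOn h (Rect (x 0) (x n) (y 0) (y j)) ∧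
      (∀ z ∈ Rect (x 0) (x n) (y 0) (y j), q (h z) = g z) ∧ h (⟨x 0, y 0⟩ : ℂ) = e₀ by
    obtain ⟨h, h1, h2, _⟩ := H m hm le_rfl
    exact ⟨h, h1, h2⟩
  intro j hj
  induction j, hj using Nat.le_induction with
  | base =>
    intro h1m
    have hsub : Rect (x 0) (x n) (y 0) (y 1) ⊆ Rect (x 0) (x n) (y 0) (y m) := by
      intro z hz
      rw [mem_rect] at hz ⊢
      exact ⟨hz.1, hz.2.1, le_trans hz.2.2 (hy h1m)⟩
    exact strip_lift hq x hx (hy (Nat.zero_le 1)) n hn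
      (fun i hi => hcell i 0 hi hm) (hg.mono hsub) he₀
  | succ j hj IH =>
    intro hjm
    obtain ⟨h, hhc, hhq, hhe⟩ := IH (le_trans (Nat.le_succ j) hjm)
    set A := Rect (x 0) (x n) (y 0) (y j) with hA
    set B := Rect (x 0) (x n) (y j) (y (j+1)) with hB
    have hy0j : y 0 ≤ y j := hy (Nat.zero_le j)
    have hyjj : y j ≤ y (j+1) := hy (Nat.le_succ j)
    have hcornerA : (⟨x 0, y j⟩ : ℂ) ∈ A := by
      rw [hA, mem_rect]; exact ⟨⟨le_rfl, hx0n⟩, hy0j, le_rfl⟩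
    have hBsub : B ⊆ Rect (x 0) (x n) (y 0) (y m) := by
      intro z hz
      rw [hB, mem_rect] at hz
      rw [mem_rect]
      exact ⟨hz.1, le_trans hy0j hz.2.1, le_trans hz.2.2 (hy hjm)⟩
    obtain ⟨h', hh'c, hh'q, hh'e⟩ := strip_lift hq x hx hyjj n hn
      (fun i hi => hcell i j hi (lt_of_lt_of_le (Nat.lt_succ_self j) hjm))
      (hg.mono hBsub) (e₀ := h (⟨x 0, y j⟩ : ℂ)) (hhq _ hcornerA)
    have hAB : A ∩ B = Rect (x 0) (x n) (y j) (y j) := by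
      ext z
      rw [mem_inter_iff, hA, hB, mem_rect, mem_rect, mem_rect]
      constructor
      · rintro ⟨⟨e1, _, e3⟩, f1, f2, _⟩
        exact ⟨e1, f2, e3⟩
      · rintro ⟨e1, e2, e3⟩
        exact ⟨⟨e1, le_trans hy0j e2, e3⟩, e1, e2, le_trans e3 hyjj⟩
    have heqAB : EqOn h h' (A ∩ B) := by
      rw [hAB]
      have hsubA' : Rect (x 0) (x n) (y j) (y j) ⊆ A := by
        intro z hz
        rw [mem_rect] at hz
        rw [hA, mem_rect]
        exact ⟨hz.1, le_trans hy0j hz.2.1, hz.2.2⟩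
      have hsubB' : Rect (x 0) (x n) (y j) (y j) ⊆ B := by
        intro z hz
        rw [mem_rect] at hz
        rw [hB, mem_rect]
        exact ⟨hz.1, hz.2.1, le_trans hz.2.2 hyjj⟩
      refine hq.eqOn_of_comp_eqOn (isPreconnected_rect _ _ _ _)
        (hhc.mono hsubA') (hh'c.mono hsubB') ?_
        (a := (⟨x 0, y j⟩ : ℂ)) ?_ ?_
      · intro z hz
        show q (h z) = q (h' z)
        rw [hhq _ (hsubA' hz), hh'q _ (hsubB' hz)]
      · rw [mem_rect]
        exact ⟨⟨le_rfl, hx0n⟩, le_rfl, le_rfl⟩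
      · rw [hh'e]
    obtain ⟨H, hHc, hHA, hHB⟩ := glue_on (pr := Complex.im) (τ := y j)
      Complex.continuous_im
      (fun z hz hle => by
        rcases hz with hz | hz
        · exact hz
        · rw [mem_rect] at hz
          rw [hA, mem_rect]
          exact ⟨hz.1, le_trans hy0j hz.2.1, hle⟩)
      (fun z hz hle => by
        rcases hz with hz | hz
        · rw [hA, mem_rect] at hz
          rw [mem_rect]
          exact ⟨hz.1, hle, le_trans hz.2.2 hyjj⟩
        · exact hz)
      hhc hh'c heqAB
    have hunion : A ∪ B = Rect (x 0) (x n) (y 0) (y (j+1)) := by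
      ext z
      rw [mem_union, hA, hB, mem_rect, mem_rect, mem_rect]
      constructor
      · rintro (⟨e1, e2, e3⟩ | ⟨e1, e2, e3⟩)
        · exact ⟨e1, e2, le_trans e3 hyjj⟩
        · exact ⟨e1, le_trans hy0j e2, e3⟩
      · rintro ⟨e1, e2, e3⟩
        rcases le_total z.im (y j) with hle | hle
        · exact Or.inl ⟨e1, e2, hle⟩
        · exact Or.inr ⟨e1, hle, e3⟩
    refine ⟨H, ?_, ?_, ?_⟩
    · rw [← hunion]; exact hHc
    · intro z hz
      rw [← hunion] at hz
      rcases hz with hz | hz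
      · rw [hHA hz]; exact hhq _ hz
      · rw [hHB hz]; exact hh'q _ hz
    · have hc00 : (⟨x 0, y 0⟩ : ℂ) ∈ A := by
        rw [hA, mem_rect]
        exact ⟨⟨le_rfl, hx0n⟩, le_rfl, hy0j⟩
      rw [hHA hc00, hhe]

set_option maxHeartbeats 1000000 in
lemma rect_lift (hq : IsCoveringMap q) (hsur : Function.Surjective q) {g : ℂ → X}
    {a b c d : ℝ} (hab : a ≤ b) (hcd : c ≤ d)
    (hg : ContinuousOn g (Rect a b c d)) :
    ∃ h : ℂ → E, ContinuousOn h (Rect a b c d) ∧ ∀ z ∈ Rect a b c d, q (h z) = g z := by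
  classical
  set K := Rect a b c d with hK
  -- rel-open covering by preimages of evenly covered sets
  have hopen : ∀ w : K, ∃ O : Set ℂ, IsOpen O ∧ (w : ℂ) ∈ O ∧
      ∃ V, HasSec q V ∧ ∀ z ∈ O ∩ K, g z ∈ V := by
    intro ⟨w, hw⟩
    obtain ⟨V, hgV, hV⟩ := exists_hasSec hq (g w)
    have h1 : g ⁻¹' V ∈ 𝓝[K] w := by
      refine (hg w hw).preimage_mem_nhdsWithin ?_
      exact hV.1.mem_nhds hgV
    rw [mem_nhdsWithin] at h1
    obtain ⟨O, hO, hwO, hOK⟩ := h1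
    exact ⟨O, hO, hwO, V, hV, fun z hz => hOK ⟨hz.1, hz.2⟩⟩
  choose O hOopen hOmem V hVsec hVmap using hopen
  obtain ⟨δ, hδ0, hδ⟩ := lebesgue_number_lemma_of_metric (isCompact_rect a b c d)
    hOopen (fun z hz => mem_iUnion.2 ⟨⟨z, hz⟩, hOmem ⟨z, hz⟩⟩)
  -- grid size
  obtain ⟨n, hngt⟩ := exists_nat_gt (max (2 * (b - a) / δ) (2 * (d - c) / δ) + 1)
  have hn0 : 0 < n := by
    have h1 : (0:ℝ) ≤ max (2 * (b - a) / δ) (2 * (d - c) / δ) := by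
      refine le_max_iff.2 (Or.inl (div_nonneg (by nlinarith) (le_of_lt hδ0)))
    have : (0:ℝ) < n := by linarith
    exact_mod_cast this
  have hnR : (0:ℝ) < n := by exact_mod_cast hn0
  have hstepx : (b - a) / n < δ / 2 := by
    rw [div_lt_iff₀ hnR]
    have h2 : 2 * (b - a) / δ < n := lt_of_le_of_lt (le_max_left _ _) (by linarith)
    rw [div_lt_iff₀ hδ0] at h2
    nlinarith
  have hstepy : (d - c) / n < δ / 2 := by
    rw [div_lt_iff₀ hnR]
    have h2 : 2 * (d - c) / δ < n := lt_of_le_of_lt (le_max_right _ _) (by linarith)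
    rw [div_lt_iff₀ hδ0] at h2
    nlinarith
  set sx := (b - a) / n with hsx
  set sy := (d - c) / n with hsy
  have hsx0 : 0 ≤ sx := div_nonneg (by linarith) (le_of_lt hnR)
  have hsy0 : 0 ≤ sy := div_nonneg (by linarith) (le_of_lt hnR)
  set x : ℕ → ℝ := fun i => a + i * sx with hxdef
  set y : ℕ → ℝ := fun j => c + j * sy with hydef
  have hxmono : Monotone x := by
    refine monotone_nat_of_le_succ ?_
    intro i
    simp only [hxdef]
    push_cast
    nlinarith
  have hymono : Monotone y := by
    refine monotone_nat_of_le_succ ?_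
    intro j
    simp only [hydef]
    push_cast
    nlinarith
  have hx0 : x 0 = a := by simp [hxdef]
  have hy0 : y 0 = c := by simp [hydef]
  have hxn : x n = b := by
    simp only [hxdef, hsx]
    field_simp
    ring
  have hyn : y n = d := by
    simp only [hydef, hsy]
    field_simp
    ring
  -- every grid cell maps into an evenly covered set
  have hcell : ∀ i j : ℕ, i < n → j < n →
      ∃ W, HasSec q W ∧ ∀ z ∈ Rect (x i) (x (i+1)) (y j) (y (j+1)), g z ∈ W := by
    intro i j hi hj
    have hin : (i:ℝ) ≤ n := by exact_mod_cast le_of_lt hi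
    have hin' : ((i:ℝ) + 1) ≤ n := by exact_mod_cast hi
    have hjn : (j:ℝ) ≤ n := by exact_mod_cast le_of_lt hj
    have hjn' : ((j:ℝ) + 1) ≤ n := by exact_mod_cast hj
    have hwK : (⟨x i, y j⟩ : ℂ) ∈ K := by
      rw [hK, mem_rect]
      have hci : (0:ℝ) ≤ (i:ℝ) := Nat.cast_nonneg i
      have hcj : (0:ℝ) ≤ (j:ℝ) := Nat.cast_nonneg j
      have hb : a + (n:ℝ) * sx = b := by rw [hsx]; field_simp; ring
      have hd : c + (n:ℝ) * sy = d := by rw [hsy]; field_simp; ring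
      constructor
      · constructor
        · simp only [hxdef]; nlinarith
        · simp only [hxdef]
          push_cast
          nlinarith [mul_le_mul_of_nonneg_right hin hsx0]
      · constructor
        · simp only [hydef]; nlinarith
        · simp only [hydef]
          push_cast
          nlinarith [mul_le_mul_of_nonneg_right hjn hsy0]
    obtain ⟨w', hball⟩ := hδ _ hwK
    refine ⟨V w', hVsec w', ?_⟩
    intro z hz
    have hci : (0:ℝ) ≤ (i:ℝ) := Nat.cast_nonneg i
    have hcj : (0:ℝ) ≤ (j:ℝ) := Nat.cast_nonneg j
    have hb : a + (n:ℝ) * sx = b := by rw [hsx]; field_simp; ring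
    have hd : c + (n:ℝ) * sy = d := by rw [hsy]; field_simp; ring
    have hcellK : z ∈ K := by
      rw [mem_rect] at hz
      rw [hK, mem_rect]
      constructor
      · constructor
        · refine le_trans ?_ hz.1.1
          simp only [hxdef]; nlinarith
        · refine le_trans hz.1.2 ?_
          simp only [hxdef]
          push_cast
          nlinarith [mul_le_mul_of_nonneg_right hin' hsx0]
      · constructor
        · refine le_trans ?_ hz.2.1
          simp only [hydef]; nlinarith
        · refine le_trans hz.2.2 ?_
          simp only [hydef]
          push_cast
          nlinarith [mul_le_mul_of_nonneg_right hjn' hsy0]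
    have hzball : z ∈ Metric.ball (⟨x i, y j⟩ : ℂ) δ := by
      rw [Metric.mem_ball, Complex.dist_eq]
      rw [mem_rect] at hz
      have hre : |(z - (⟨x i, y j⟩ : ℂ)).re| ≤ sx := by
        rw [Complex.sub_re]
        have hre' : (⟨x i, y j⟩ : ℂ).re = x i := rfl
        rw [hre', abs_le]
        constructor
        · nlinarith [hz.1.1]
        · have hx1 : x (i+1) = x i + sx := by
            simp only [hxdef]; push_cast; ring
          nlinarith [hz.1.2]
      have him : |(z - (⟨x i, y j⟩ : ℂ)).im| ≤ sy := by
        rw [Complex.sub_im]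
        have him' : (⟨x i, y j⟩ : ℂ).im = y j := rfl
        rw [him', abs_le]
        constructor
        · nlinarith [hz.2.1]
        · have hy1 : y (j+1) = y j + sy := by
            simp only [hydef]; push_cast; ring
          nlinarith [hz.2.2]
      calc ‖z - (⟨x i, y j⟩ : ℂ)‖
          ≤ |(z - (⟨x i, y j⟩ : ℂ)).re| + |(z - (⟨x i, y j⟩ : ℂ)).im| :=
            Complex.norm_le_abs_re_add_abs_im _
        _ ≤ sx + sy := add_le_add hre him
        _ < δ / 2 + δ / 2 := add_lt_add hstepx hstepy
        _ = δ := by ring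
    exact hVmap w' z ⟨hball hzball, hcellK⟩
  obtain ⟨e₀, he₀⟩ := hsur (g (⟨x 0, y 0⟩ : ℂ))
  have hgK : ContinuousOn g (Rect (x 0) (x n) (y 0) (y n)) := by
    rw [hx0, hxn, hy0, hyn]; exact hg
  obtain ⟨h, hhc, hhq⟩ := rect_lift_grid hq x y hxmono hymono n n hn0 hn0 hcell hgK he₀
  rw [hx0, hxn, hy0, hyn] at hhc hhq
  exact ⟨h, hhc, hhq⟩

end Lift


section Holo
open scoped Topology
open Filter

lemma him_open : IsOpen {z : ℂ | 0 < z.im} := isOpen_lt continuous_const Complex.continuous_im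

/-- A continuous lift of a holomorphic map through a holomorphic map on the upper half
plane is holomorphic, provided the base map is not locally constant anywhere. -/
lemma lift_differentiableOn {P G H : ℂ → ℂ} {U β : Set ℂ}
    (hUo : IsOpen U) (hUc : IsPreconnected U) (hβo : IsOpen β) (hβU : β ⊆ U)
    (hP : DifferentiableOn ℂ P {z : ℂ | 0 < z.im})
    (hG : DifferentiableOn ℂ G U)
    (hHc : ContinuousOn H β) (hIm : ∀ z ∈ β, 0 < (H z).im)
    (hPH : ∀ z ∈ β, P (H z) = G z)
    (hnc : ¬ ∃ k : ℂ, EqOn G (fun _ => k) U) :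
    DifferentiableOn ℂ H β := by
  have hGa : AnalyticOnNhd ℂ G U := hG.analyticOnNhd hUo
  have hPa : AnalyticOnNhd ℂ P {z : ℂ | 0 < z.im} := hP.analyticOnNhd him_open
  have localConst : ∀ z₀ ∈ β, (∀ᶠ z in 𝓝 z₀, G z = G z₀) → False := by
    intro z₀ hz₀ hev
    have hfr : ∃ᶠ z in 𝓝[≠] z₀, G z = G z₀ :=
      (hev.filter_mono nhdsWithin_le_nhds).frequently
    exact hnc ⟨G z₀, hGa.eqOn_of_preconnected_of_frequently_eq analyticOnNhd_const
      hUc (hβU hz₀) hfr⟩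
  have good : ∀ z₀ ∈ β, deriv P (H z₀) ≠ 0 → DifferentiableAt ℂ H z₀ := by
    intro z₀ hz₀ hne0
    have hw₀ : (0:ℝ) < (H z₀).im := hIm z₀ hz₀
    have hPana : AnalyticAt ℂ P (H z₀) := hPa _ hw₀
    have hsd : HasStrictDerivAt P (deriv P (H z₀)) (H z₀) := by
      obtain ⟨pp, hpp⟩ := hPana
      have h1 := hpp.hasStrictDerivAt
      rw [h1.hasDerivAt.deriv]
      exact h1
    have hHtend : ContinuousAt H z₀ := hHc.continuousAt (hβo.mem_nhds hz₀)
    have hlinv := (hsd.hasStrictFDerivAt_equiv hne0).eventually_left_inverse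
    set ψ := (hsd.hasStrictFDerivAt_equiv hne0).localInverse P _ (H z₀) with hψ
    have hψd : DifferentiableAt ℂ ψ (P (H z₀)) :=
      (hsd.hasStrictFDerivAt_equiv hne0).to_localInverse.differentiableAt
    have hev1 : ∀ᶠ z in 𝓝 z₀, ψ (P (H z)) = H z := hHtend.tendsto.eventually hlinv
    have hev2 : ∀ᶠ z in 𝓝 z₀, P (H z) = G z := by
      filter_upwards [hβo.eventually_mem hz₀] with z hz
      exact hPH z hz
    have hev : H =ᶠ[𝓝 z₀] fun z => ψ (G z) := by
      filter_upwards [hev1, hev2] with z h1 h2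
      rw [← h1, h2]
    have hcomp : DifferentiableAt ℂ (fun z => ψ (G z)) z₀ := by
      have hG0 : P (H z₀) = G z₀ := hPH z₀ hz₀
      rw [hG0] at hψd
      exact hψd.comp z₀ (hG.differentiableAt (hUo.mem_nhds (hβU hz₀)))
    exact hcomp.congr_of_eventuallyEq hev
  intro z₀ hz₀
  by_cases hd0 : deriv P (H z₀) ≠ 0
  · exact (good z₀ hz₀ hd0).differentiableWithinAt
  · rw [not_not] at hd0
    have hHtend : ContinuousAt H z₀ := hHc.continuousAt (hβo.mem_nhds hz₀)
    have hevne : ∀ᶠ z in 𝓝[≠] z₀, deriv P (H z) ≠ 0 := by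
      by_contra hcon
      have hfreq : ∃ᶠ z in 𝓝[≠] z₀, deriv P (H z) = 0 := by
        simpa [Filter.not_eventually, not_not] using hcon
      have hsplit : (∃ᶠ z in 𝓝[≠] z₀, H z = H z₀) ∨
          ∃ᶠ z in 𝓝[≠] z₀, (H z ≠ H z₀ ∧ deriv P (H z) = 0) := by
        rw [← Filter.frequently_or_distrib]
        refine hfreq.mono ?_
        intro z hz
        by_cases hH : H z = H z₀
        · exact Or.inl hH
        · exact Or.inr ⟨hH, hz⟩
      rcases hsplit with hA | hB
      · have hevβ : ∀ᶠ z in 𝓝[≠] z₀, z ∈ β :=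
          (hβo.eventually_mem hz₀).filter_mono nhdsWithin_le_nhds
        have hfrG : ∃ᶠ z in 𝓝[≠] z₀, G z = G z₀ := by
          refine (hA.and_eventually hevβ).mono ?_
          rintro z ⟨h1, h2⟩
          rw [← hPH z h2, h1, hPH z₀ hz₀]
        exact localConst z₀ hz₀
          (((hGa _ (hβU hz₀)).frequently_eq_iff_eventually_eq analyticAt_const).1 hfrG)
      · have hT : Filter.Tendsto H (𝓝[≠] z₀) (𝓝 (H z₀)) :=
          hHtend.tendsto.mono_left nhdsWithin_le_nhds
        have hfw : ∃ᶠ w in 𝓝 (H z₀), (w ≠ H z₀ ∧ deriv P w = 0) := hT.frequently hB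
        have hfw' : ∃ᶠ w in 𝓝[≠] (H z₀), deriv P w = 0 := by
          rw [frequently_nhdsWithin_iff]
          exact hfw.mono (fun w hw => ⟨hw.2, hw.1⟩)
        have hP'a : AnalyticAt ℂ (deriv P) (H z₀) :=
          (hPa.deriv_of_isOpen him_open) _ (hIm z₀ hz₀)
        have hev0 : ∀ᶠ w in 𝓝 (H z₀), deriv P w = 0 :=
          hP'a.frequently_zero_iff_eventually_zero.1 hfw'
        obtain ⟨ρ, hρ0, hρ⟩ := Metric.eventually_nhds_iff_ball.1
          (hev0.and (him_open.eventually_mem (hIm z₀ hz₀)))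
        have hPc : ∀ w ∈ Metric.ball (H z₀) ρ, P w = P (H z₀) := by
          intro w hw
          refine (convex_ball _ _).is_const_of_fderivWithin_eq_zero (𝕜 := ℂ)
            (hP.mono (fun v hv => (hρ v hv).2)) ?_ hw (Metric.mem_ball_self hρ0)
          intro v hv
          rw [fderivWithin_of_isOpen Metric.isOpen_ball hv, ← toSpanSingleton_deriv, (hρ v hv).1]
          ext w
          simp
        have hevG : ∀ᶠ z in 𝓝 z₀, G z = G z₀ := by
          have h1 : ∀ᶠ z in 𝓝 z₀, H z ∈ Metric.ball (H z₀) ρ :=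
            hHtend.tendsto (Metric.ball_mem_nhds _ hρ0)
          filter_upwards [h1, hβo.eventually_mem hz₀] with z hz1 hz2
          rw [← hPH z hz2, hPc _ hz1, hPH z₀ hz₀]
        exact localConst z₀ hz₀ hevG
    rw [eventually_nhdsWithin_iff] at hevne
    obtain ⟨ρ, hρ0, hρb⟩ := Metric.mem_nhds_iff.1 (Filter.inter_mem hevne (hβo.mem_nhds hz₀))
    have hdiff : DifferentiableOn ℂ H (Metric.ball z₀ ρ \ {z₀}) := by
      intro z hz
      have hzm := hρb hz.1
      have hzne : z ≠ z₀ := by simpa using hz.2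
      exact (good z hzm.2 (hzm.1 (by simpa using hzne))).differentiableWithinAt
    have hfull : DifferentiableOn ℂ H (Metric.ball z₀ ρ) :=
      (Complex.differentiableOn_compl_singleton_and_continuousAt_iff
        (Metric.ball_mem_nhds _ hρ0)).1 ⟨hdiff, hHtend⟩
    exact ((hfull z₀ (Metric.mem_ball_self hρ0)).differentiableAt
      (Metric.isOpen_ball.mem_nhds (Metric.mem_ball_self hρ0))).differentiableWithinAt

end Holo

section Main
open scoped Topology
open Filter Metric

lemma nbhdOne_eq : NbhdOne = ⋃ u ∈ Set.Ioo (0:ℝ) 1, Metric.ball ((u:ℝ):ℂ) 1 := by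
  ext z
  simp [NbhdOne, Metric.mem_ball]

lemma nbhdOne_open : IsOpen NbhdOne := by
  rw [nbhdOne_eq]
  exact isOpen_biUnion (fun u _ => Metric.isOpen_ball)

lemma real_mem_nbhdOne {u : ℝ} (hu : u ∈ Set.Ioo (0:ℝ) 1) : ((u:ℝ):ℂ) ∈ NbhdOne :=
  ⟨u, hu, by simp⟩

lemma nbhdOne_convex : Convex ℝ NbhdOne := by
  intro z₁ hz₁ z₂ hz₂ α β hα hβ hs
  obtain ⟨t₁, ht₁, hd₁⟩ := hz₁
  obtain ⟨t₂, ht₂, hd₂⟩ := hz₂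
  refine ⟨α*t₁ + β*t₂, ?_, ?_⟩
  · have := (convex_Ioo (0:ℝ) 1) ht₁ ht₂ hα hβ hs
    simpa [smul_eq_mul] using this
  · have key : α • z₁ + β • z₂ - ((α*t₁ + β*t₂ : ℝ):ℂ)
        = (α:ℂ) * (z₁ - (t₁:ℂ)) + (β:ℂ) * (z₂ - (t₂:ℂ)) := by
      push_cast
      rw [Complex.real_smul, Complex.real_smul]
      ring
    rw [Complex.dist_eq, key]
    rw [Complex.dist_eq] at hd₁ hd₂
    calc ‖(α:ℂ)*(z₁ - (t₁:ℂ)) + (β:ℂ)*(z₂ - (t₂:ℂ))‖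
        ≤ ‖(α:ℂ)*(z₁ - (t₁:ℂ))‖ + ‖(β:ℂ)*(z₂ - (t₂:ℂ))‖ :=
          norm_add_le _ _
      _ = α * ‖z₁ - (t₁:ℂ)‖ + β * ‖z₂ - (t₂:ℂ)‖ := by
          rw [norm_mul, norm_mul, Complex.norm_real, Complex.norm_real,
            Real.norm_of_nonneg hα, Real.norm_of_nonneg hβ]
      _ < 1 := by
          rcases lt_or_eq_of_le hα with hα' | hα'
          · have e1 : α * ‖z₁ - (t₁:ℂ)‖ < α * 1 :=
              mul_lt_mul_of_pos_left hd₁ hα'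
            have e2 : β * ‖z₂ - (t₂:ℂ)‖ ≤ β * 1 :=
              mul_le_mul_of_nonneg_left (le_of_lt hd₂) hβ
            linarith
          · have hβ1 : β = 1 := by linarith
            rw [← hα', hβ1]
            simpa using hd₂

lemma abs_lt_one_of_real {w : ℂ} (him : w.im = 0) (hre : w.re ∈ Set.Ioo (-1:ℝ) 1) :
    ‖w‖ < 1 := by
  have h1 : w = (w.re : ℂ) := Complex.ext rfl (by simp [him])
  rw [h1, Complex.norm_real, Real.norm_eq_abs]
  exact abs_lt.2 ⟨hre.1, hre.2⟩

lemma mem_annulus_of_real {ε : ℝ} (hε : ε ∈ Set.Ioo (0:ℝ) (1/4)) {w₁ w₂ : ℂ}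
    (h1im : w₁.im = 0) (h2im : w₂.im = 0) (h1re : w₁.re ∈ Set.Ioo (-1:ℝ) 1)
    (h2re : w₂.re ∈ Set.Ioo (-1:ℝ) 1) (hw : w₁ * w₂ = (ε:ℂ)) :
    w₁ ∈ Annulus (ε/2) 2 := by
  have h1 : ‖w₁‖ < 1 := abs_lt_one_of_real h1im h1re
  have h2 : ‖w₂‖ < 1 := abs_lt_one_of_real h2im h2re
  have hm : ‖w₁‖ * ‖w₂‖ = ε := by
    rw [← norm_mul, hw, Complex.norm_real, Real.norm_eq_abs, abs_of_pos hε.1]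
  have hub : ‖w₁‖ * ‖w₂‖ ≤ ‖w₁‖ :=
    mul_le_of_le_one_right (norm_nonneg w₁) (le_of_lt h2)
  constructor
  · have := hε.1
    rw [hm] at hub
    linarith
  · linarith

/-- The quantitative Schwarz–Pick step. -/
lemma schwarz_step {h : ℂ → UpperHalfPlane} {c : ℂ} {r : ℝ} (hr : 0 < r)
    (hH : DifferentiableOn ℂ (fun z => ((h z : ℂ))) (Metric.ball c r))
    {z : ℂ} (hz : z ∈ Metric.ball c r) (hzd : dist z c ≤ r * (5/7)) :
    dist (h z) (h c) ≤ 2 * Real.arsinh 2 := by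
  set a0 : ℂ := ((h c : ℂ)) with ha0
  have haim : 0 < a0.im := by
    rw [ha0, UpperHalfPlane.coe_im]
    exact (h c).im_pos
  have hwim : ∀ w : ℂ → UpperHalfPlane, True := fun _ => trivial
  have him : ∀ v : UpperHalfPlane, 0 < ((v : ℂ)).im := by
    intro v
    rw [UpperHalfPlane.coe_im]
    exact v.im_pos
  set cc : ℂ := (starRingEnd ℂ) a0 with hcc
  have hkey : ∀ w : ℂ, Complex.normSq (w - cc) = Complex.normSq (w - a0) + 4*(w.im*a0.im) := by
    intro w
    simp only [hcc, Complex.normSq_apply, Complex.sub_re, Complex.sub_im,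
      Complex.conj_re, Complex.conj_im]
    ring
  have hstrict : ∀ w : ℂ, 0 < w.im → ‖w - a0‖ < ‖w - cc‖ := by
    intro w hw
    have h1 : Complex.normSq (w - a0) < Complex.normSq (w - cc) := by
      rw [hkey w]
      nlinarith
    rw [Complex.norm_def, Complex.norm_def]
    exact Real.sqrt_lt_sqrt (Complex.normSq_nonneg _) h1
  have hccpos : ∀ w : ℂ, 0 < w.im → 0 < ‖w - cc‖ :=
    fun w hw => lt_of_le_of_lt (norm_nonneg _) (hstrict w hw)
  have hdenne : ∀ w : ℂ, 0 < w.im → w - cc ≠ 0 := by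
    intro w hw hcon
    have h2 := hccpos w hw
    rw [hcon] at h2
    simp at h2
  set g : ℂ → ℂ := fun z => (((h z : ℂ)) - a0)/(((h z : ℂ)) - cc) with hg
  have hgd : DifferentiableOn ℂ g (Metric.ball c r) := by
    refine DifferentiableOn.div (hH.sub (differentiableOn_const _))
      (hH.sub (differentiableOn_const _)) ?_
    intro w hw
    exact hdenne _ (him (h w))
  have hgc : g c = 0 := by
    rw [hg]
    simp [← ha0]
  have hmaps : Set.MapsTo g (Metric.ball c r) (Metric.ball (g c) 1) := by
    intro w hw
    rw [hgc, Metric.mem_ball, Complex.dist_eq, sub_zero, hg]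
    simp only []
    rw [norm_div]
    exact (div_lt_one (hccpos _ (him (h w)))).2 (hstrict _ (him (h w)))
  have hsch := Complex.dist_le_div_mul_dist_of_mapsTo_ball hgd (hmaps.mono_right Metric.ball_subset_closedBall) hz
  have hratio : ‖((h z : ℂ)) - a0‖ ≤ 5/7 * ‖((h z : ℂ)) - cc‖ := by
    rw [hgc, Complex.dist_eq, sub_zero, hg] at hsch
    simp only [] at hsch
    rw [norm_div] at hsch
    have h2 : 1/r * dist z c ≤ 5/7 := by
      rw [one_div, inv_mul_le_iff₀ hr]
      linarith
    have h3 : ‖((h z : ℂ)) - a0‖ / ‖((h z : ℂ)) - cc‖ ≤ 5/7 :=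
      le_trans hsch h2
    rw [div_le_iff₀ (hccpos _ (him (h z)))] at h3
    exact h3
  have hsq : (‖((h z : ℂ)) - a0‖)^2 ≤ (25/6) * (((h z : ℂ)).im * a0.im) := by
    have hb := hkey ((h z : ℂ))
    have h4 : (‖((h z : ℂ)) - a0‖)^2 ≤ (25/49) * (‖((h z : ℂ)) - cc‖)^2 := by
      nlinarith [norm_nonneg (((h z : ℂ)) - a0), norm_nonneg (((h z : ℂ)) - cc)]
    rw [Complex.sq_norm, Complex.sq_norm] at h4
    rw [Complex.sq_norm]
    nlinarith [Complex.normSq_nonneg (((h z : ℂ)) - a0)]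
  rw [UpperHalfPlane.dist_eq]
  have hIIpos : 0 < (h z).im * (h c).im := mul_pos (h z).im_pos (h c).im_pos
  have hsqrtpos : 0 < Real.sqrt ((h z).im * (h c).im) := Real.sqrt_pos.2 hIIpos
  have him1 : ((h z : ℂ)).im = (h z).im := UpperHalfPlane.coe_im _
  have him2 : a0.im = (h c).im := by rw [ha0]; exact UpperHalfPlane.coe_im _
  have hle2 : dist ((h z):ℂ) ((h c):ℂ) / (2 * Real.sqrt ((h z).im * (h c).im)) ≤ 2 := by
    rw [div_le_iff₀ (by positivity), Complex.dist_eq, ← ha0]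
    have hsq' : (‖((h z : ℂ)) - a0‖)^2 ≤ 16 * ((h z).im * (h c).im) := by
      rw [him1, him2] at hsq
      nlinarith
    nlinarith [Real.sq_sqrt (le_of_lt hIIpos), Real.sqrt_nonneg ((h z).im*(h c).im),
      norm_nonneg (((h z : ℂ)) - a0)]
  have := Real.arsinh_le_arsinh.2 hle2
  linarith

end Main

end
end OmegaAux

open OmegaAux Metric Filter
open scoped Topology

set_option maxHeartbeats 1000000 in
/-- If `f : (0,1) → X_ε = {xy = ε} ∩ (-1,1)²` extends holomorphically to the
complex `1`-neighborhood of `(0,1)` with both coordinates bounded by `2` there,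
then the image of the `x`-coordinate has hyperbolic diameter in the annulus
`A(ε/2, 2)` at most an absolute constant independent of `ε`. -/
theorem omega_norm_image_bounded_diameter :
    ∃ C : ℝ, 0 < C ∧
      ∀ ε : ℝ, ε ∈ Set.Ioo (0:ℝ) (1/4) →
        ∀ p : UpperHalfPlane → ℂ,
          IsHolomorphicCoveringOnto p (Annulus (ε / 2) 2) →
          ∀ F : ℂ → ℂ × ℂ,
            DifferentiableOn ℂ F NbhdOne →
            (∀ t : ℝ, t ∈ Set.Ioo (0:ℝ) 1 →
              ((F t).1.im = 0 ∧ (F t).2.im = 0 ∧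
                (F t).1.re ∈ Set.Ioo (-1:ℝ) 1 ∧ (F t).2.re ∈ Set.Ioo (-1:ℝ) 1 ∧
                (F t).1 * (F t).2 = (ε : ℂ))) →
            (∀ z ∈ NbhdOne, ‖(F z).1‖ ≤ 2 ∧ ‖(F z).2‖ ≤ 2) →
            ∀ s ∈ Set.Ioo (0:ℝ) 1, ∀ t ∈ Set.Ioo (0:ℝ) 1,
              hypDist p (F s).1 (F t).1 ≤ C := by
  classical
  have harsinh : (0:ℝ) < Real.arsinh 2 := Real.arsinh_pos_iff.2 (by norm_num)
  refine ⟨4 * Real.arsinh 2, by linarith, ?_⟩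
  intro ε hε p hp F hF hreal hbd s hs t ht
  obtain ⟨hmem, hsurj, ⟨P, hPdiff, hPp⟩, hcov⟩ := hp
  have hCpos : (0:ℝ) ≤ 4 * Real.arsinh 2 := by linarith
  have hbdd : BddBelow {d | ∃ z w : UpperHalfPlane, p z = (F s).1 ∧ p w = (F t).1 ∧ d = dist z w} := by
    refine ⟨0, ?_⟩
    rintro d ⟨z, w, _, _, rfl⟩
    exact dist_nonneg
  have hrs := hreal s hs
  have hrt := hreal t ht
  have hmem_s : (F (s:ℝ)).1 ∈ Annulus (ε/2) 2 :=
    mem_annulus_of_real hε hrs.1 hrs.2.1 hrs.2.2.1 hrs.2.2.2.1 hrs.2.2.2.2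
  have hmem_t : (F (t:ℝ)).1 ∈ Annulus (ε/2) 2 :=
    mem_annulus_of_real hε hrt.1 hrt.2.1 hrt.2.2.1 hrt.2.2.2.1 hrt.2.2.2.2
  by_cases hne : (F (s:ℝ)).1 = (F (t:ℝ)).1
  · obtain ⟨e, he⟩ := hsurj ⟨(F (s:ℝ)).1, hmem_s⟩
    have hpe : p e = (F (s:ℝ)).1 := by
      have h2 := congrArg Subtype.val he
      simpa using h2
    refine le_trans (csInf_le hbdd ⟨e, e, hpe, by rw [← hne]; exact hpe, (dist_self e).symm⟩) hCpos
  -- main case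
  have hNo : IsOpen NbhdOne := nbhdOne_open
  have hNpre : IsPreconnected NbhdOne := nbhdOne_convex.isPreconnected
  have hF1 : DifferentiableOn ℂ (fun z => (F z).1) NbhdOne := hF.fst
  have hF2 : DifferentiableOn ℂ (fun z => (F z).2) NbhdOne := hF.snd
  -- identity theorem : the product is ε on all of NbhdOne
  have hprodN : Set.EqOn (fun z => (F z).1 * (F z).2) (fun _ => (ε:ℂ)) NbhdOne := by
    have hG : AnalyticOnNhd ℂ (fun z => (F z).1 * (F z).2) NbhdOne :=
      (hF1.analyticOnNhd hNo).mul (hF2.analyticOnNhd hNo)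
    have hhalf : ((1/2 : ℝ):ℂ) ∈ NbhdOne := real_mem_nbhdOne (by norm_num)
    have htendR : Filter.Tendsto (fun k : ℕ => (1/2 + ((k:ℝ)+3)⁻¹ : ℝ)) atTop (𝓝 (1/2)) := by
      have h0 : Filter.Tendsto (fun k : ℕ => ((k:ℝ)+3)⁻¹) atTop (𝓝 0) :=
        (Filter.tendsto_atTop_add_const_right _ 3 tendsto_natCast_atTop_atTop).inv_tendsto_atTop
      simpa using tendsto_const_nhds.add h0
    have htend : Filter.Tendsto (fun k : ℕ => ((1/2 + ((k:ℝ)+3)⁻¹ : ℝ):ℂ)) atTop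
        (𝓝[≠] ((1/2:ℝ):ℂ)) := by
      rw [tendsto_nhdsWithin_iff]
      constructor
      · exact (Complex.continuous_ofReal.tendsto _).comp htendR
      · refine Filter.Eventually.of_forall ?_
        intro k
        simp only [Set.mem_compl_iff, Set.mem_singleton_iff]
        intro hcon
        have h3 := Complex.ofReal_inj.1 hcon
        have hk : (0:ℝ) < ((k:ℝ)+3)⁻¹ := by positivity
        linarith
    have hfreq : ∃ᶠ z in 𝓝[≠] ((1/2:ℝ):ℂ),
        (fun z => (F z).1 * (F z).2) z = (fun _ => (ε:ℂ)) z := by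
      refine htend.frequently (Filter.Frequently.of_forall ?_)
      intro k
      have hk3 : (0:ℝ) < ((k:ℝ)+3)⁻¹ := by positivity
      have hk3' : ((k:ℝ)+3)⁻¹ ≤ 1/3 := by
        rw [show (1:ℝ)/3 = 3⁻¹ by norm_num]
        refine inv_anti₀ (by norm_num) ?_
        have := Nat.cast_nonneg (α := ℝ) k
        linarith
      exact (hreal _ ⟨by linarith, by linarith⟩).2.2.2.2
    exact hG.eqOn_of_preconnected_of_frequently_eq analyticOnNhd_const hNpre hhalf hfreq
  -- strict maximum principle bound
  have hmax : ∀ (G : ℂ → ℂ), DifferentiableOn ℂ G NbhdOne →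
      (∀ z ∈ NbhdOne, ‖G z‖ ≤ 2) → ‖G ((s:ℝ):ℂ)‖ < 1 →
      ∀ z ∈ NbhdOne, ‖G z‖ < 2 := by
    intro G hGd hGb hGs z₀ hz₀
    rcases lt_or_eq_of_le (hGb z₀ hz₀) with hlt | heq2
    · exact hlt
    · exfalso
      have hmx : IsMaxOn (norm ∘ G) NbhdOne z₀ := by
        intro z hz
        simp only [Function.comp_apply, Set.mem_setOf_eq]
        rw [heq2]
        exact hGb z hz
      have heqn := Complex.norm_eqOn_of_isPreconnected_of_isMaxOn hNpre hNo hGd hz₀ hmx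
      have h2 := heqn (real_mem_nbhdOne hs)
      simp only [Function.comp_apply, Function.const_apply] at h2
      rw [heq2] at h2
      linarith
  have habs1 : ∀ z ∈ NbhdOne, ‖(F z).1‖ < 2 :=
    hmax _ hF1 (fun z hz => (hbd z hz).1) (abs_lt_one_of_real hrs.1 hrs.2.2.1)
  have habs2 : ∀ z ∈ NbhdOne, ‖(F z).2‖ < 2 :=
    hmax _ hF2 (fun z hz => (hbd z hz).2) (abs_lt_one_of_real hrs.2.1 hrs.2.2.2.1)
  have hSmem : ∀ z ∈ NbhdOne, (F z).1 ∈ Annulus (ε/2) 2 := by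
    intro z hz
    have hpz : (F z).1 * (F z).2 = (ε:ℂ) := hprodN hz
    have hm : ‖(F z).1‖ * ‖(F z).2‖ = ε := by
      rw [← norm_mul, hpz, Complex.norm_real, Real.norm_eq_abs, abs_of_pos hε.1]
    have hA0 : 0 < ‖(F z).1‖ := by
      rcases lt_or_eq_of_le (norm_nonneg (F z).1) with hlt | heq2
      · exact hlt
      · exfalso
        rw [← heq2, zero_mul] at hm
        linarith [hε.1]
    have hprod2 : ‖(F z).1‖ * ‖(F z).2‖ < ‖(F z).1‖ * 2 :=
      mul_lt_mul_of_pos_left (habs2 z hz) hA0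
    exact ⟨by rw [hm] at hprod2; linarith, habs1 z hz⟩
  -- the square around the midpoint
  set u₀ : ℝ := (s+t)/2 with hu₀def
  have hu₀ : u₀ ∈ Set.Ioo (0:ℝ) 1 := by
    constructor
    · rw [hu₀def]; linarith [hs.1, ht.1]
    · rw [hu₀def]; linarith [hs.2, ht.2]
  have hKN : Rect (u₀ - 7/10) (u₀ + 7/10) (-(7/10)) (7/10) ⊆ NbhdOne := by
    intro z hz
    rw [mem_rect] at hz
    refine ⟨u₀, hu₀, ?_⟩
    rw [Complex.dist_eq]
    have hre : (z - ((u₀:ℝ):ℂ)).re = z.re - u₀ := by simp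
    have him : (z - ((u₀:ℝ):ℂ)).im = z.im := by simp
    have h3 : (‖z - ((u₀:ℝ):ℂ)‖)^2
        = (z.re - u₀)^2 + z.im^2 := by
      rw [Complex.sq_norm, Complex.normSq_apply, hre, him]
      ring
    nlinarith [norm_nonneg (z - ((u₀:ℝ):ℂ)), hz.1.1, hz.1.2, hz.2.1, hz.2.2]
  have hβK : Metric.ball ((u₀:ℝ):ℂ) (7/10) ⊆ Rect (u₀ - 7/10) (u₀ + 7/10) (-(7/10)) (7/10) := by
    intro z hz
    rw [Metric.mem_ball, Complex.dist_eq] at hz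
    have hre := Complex.abs_re_le_norm (z - ((u₀:ℝ):ℂ))
    have him := Complex.abs_im_le_norm (z - ((u₀:ℝ):ℂ))
    have hre' : (z - ((u₀:ℝ):ℂ)).re = z.re - u₀ := by simp
    have him' : (z - ((u₀:ℝ):ℂ)).im = z.im := by simp
    rw [hre'] at hre
    rw [him'] at him
    rw [mem_rect]
    constructor
    · constructor
      · nlinarith [neg_abs_le (z.re - u₀)]
      · nlinarith [le_abs_self (z.re - u₀)]
    · constructor
      · nlinarith [neg_abs_le z.im]
      · nlinarith [le_abs_self z.im]
  -- the codomain-restricted boundary map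
  have h1S : (1:ℂ) ∈ Annulus (ε/2) 2 := by
    constructor
    · rw [norm_one]
      linarith [hε.2]
    · rw [norm_one]
      norm_num
  set G1 : ℂ → ℂ := fun z => if (F z).1 ∈ Annulus (ε/2) 2 then (F z).1 else 1 with hG1def
  have hG1S : ∀ z, G1 z ∈ Annulus (ε/2) 2 := by
    intro z
    simp only [hG1def]
    by_cases hc : (F z).1 ∈ Annulus (ε/2) 2
    · rw [if_pos hc]; exact hc
    · rw [if_neg hc]; exact h1S
  have hG1K : Set.EqOn G1 (fun z => (F z).1) (Rect (u₀ - 7/10) (u₀ + 7/10) (-(7/10)) (7/10)) := by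
    intro z hz
    simp only [hG1def]
    exact if_pos (hSmem z (hKN hz))
  have hgSc : ContinuousOn (Set.codRestrict G1 (Annulus (ε/2) 2) hG1S)
      (Rect (u₀ - 7/10) (u₀ + 7/10) (-(7/10)) (7/10)) := by
    have hG1c : ContinuousOn G1 (Rect (u₀ - 7/10) (u₀ + 7/10) (-(7/10)) (7/10)) :=
      ((hF1.continuousOn.mono hKN)).congr hG1K
    rw [continuousOn_iff_continuous_restrict]
    exact Continuous.subtype_mk (continuousOn_iff_continuous_restrict.mp hG1c) _
  obtain ⟨h, hhc, hhq⟩ := rect_lift hcov hsurj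
    (by linarith : u₀ - 7/10 ≤ u₀ + 7/10) (by norm_num : -(7/10:ℝ) ≤ 7/10) hgSc
  have hplift : ∀ z ∈ Rect (u₀ - 7/10) (u₀ + 7/10) (-(7/10)) (7/10), p (h z) = (F z).1 := by
    intro z hz
    have h1 := hhq z hz
    have h2 := congrArg Subtype.val h1
    rw [Set.val_codRestrict_apply, Set.val_codRestrict_apply] at h2
    rw [h2]
    exact hG1K hz
  -- holomorphy of the lift
  have hHim : ∀ z : ℂ, 0 < (((h z : ℂ))).im := by
    intro z
    rw [UpperHalfPlane.coe_im]
    exact (h z).im_pos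
  have hPH : ∀ z ∈ Metric.ball ((u₀:ℝ):ℂ) (7/10), P ((h z : ℂ)) = (F z).1 := by
    intro z hz
    rw [hPp (h z)]
    exact hplift z (hβK hz)
  have hnc : ¬ ∃ k : ℂ, Set.EqOn (fun z => (F z).1) (fun _ => k) NbhdOne := by
    rintro ⟨k, hk⟩
    have h1 : (F ((s:ℝ):ℂ)).1 = k := hk (real_mem_nbhdOne hs)
    have h2 : (F ((t:ℝ):ℂ)).1 = k := hk (real_mem_nbhdOne ht)
    exact hne (h1.trans h2.symm)
  have keyH : DifferentiableOn ℂ (fun z => ((h z : ℂ))) (Metric.ball ((u₀:ℝ):ℂ) (7/10)) :=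
    lift_differentiableOn hNo hNpre Metric.isOpen_ball (hβK.trans hKN)
      hPdiff hF1 (UpperHalfPlane.continuous_coe.comp_continuousOn (hhc.mono hβK))
      (fun z _ => hHim z) hPH hnc
  -- Schwarz–Pick estimates
  have hdiff_st : |s - t| ≤ 1 := by
    rw [abs_le]
    constructor
    · linarith [hs.1, ht.2]
    · linarith [hs.2, ht.1]
  have hdist_s : dist ((s:ℝ):ℂ) ((u₀:ℝ):ℂ) ≤ (7/10) * (5/7) := by
    rw [Complex.dist_eq, ← Complex.ofReal_sub, Complex.norm_real, Real.norm_eq_abs]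
    have h4 : s - u₀ = (s - t)/2 := by rw [hu₀def]; ring
    rw [h4, abs_div]
    rw [abs_of_pos (by norm_num : (0:ℝ) < 2)]
    linarith [hdiff_st]
  have hdist_t : dist ((t:ℝ):ℂ) ((u₀:ℝ):ℂ) ≤ (7/10) * (5/7) := by
    rw [Complex.dist_eq, ← Complex.ofReal_sub, Complex.norm_real, Real.norm_eq_abs]
    have h4 : t - u₀ = (t - s)/2 := by rw [hu₀def]; ring
    rw [h4, abs_div]
    rw [abs_of_pos (by norm_num : (0:ℝ) < 2)]
    rw [abs_sub_comm]
    linarith [hdiff_st]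
  have hsβ : ((s:ℝ):ℂ) ∈ Metric.ball ((u₀:ℝ):ℂ) (7/10) := by
    rw [Metric.mem_ball]
    calc dist ((s:ℝ):ℂ) ((u₀:ℝ):ℂ) ≤ (7/10) * (5/7) := hdist_s
    _ < 7/10 := by norm_num
  have htβ : ((t:ℝ):ℂ) ∈ Metric.ball ((u₀:ℝ):ℂ) (7/10) := by
    rw [Metric.mem_ball]
    calc dist ((t:ℝ):ℂ) ((u₀:ℝ):ℂ) ≤ (7/10) * (5/7) := hdist_t
    _ < 7/10 := by norm_num
  have hds := schwarz_step (by norm_num : (0:ℝ) < 7/10) keyH hsβ hdist_s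
  have hdt := schwarz_step (by norm_num : (0:ℝ) < 7/10) keyH htβ hdist_t
  have htri := dist_triangle (h ((s:ℝ):ℂ)) (h ((u₀:ℝ):ℂ)) (h ((t:ℝ):ℂ))
  have hcomm : dist (h ((u₀:ℝ):ℂ)) (h ((t:ℝ):ℂ)) = dist (h ((t:ℝ):ℂ)) (h ((u₀:ℝ):ℂ)) :=
    dist_comm _ _
  have hsK : ((s:ℝ):ℂ) ∈ Rect (u₀ - 7/10) (u₀ + 7/10) (-(7/10)) (7/10) := hβK hsβ
  have htK : ((t:ℝ):ℂ) ∈ Rect (u₀ - 7/10) (u₀ + 7/10) (-(7/10)) (7/10) := hβK htβ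
  refine le_trans (csInf_le hbdd ⟨h ((s:ℝ):ℂ), h ((t:ℝ):ℂ), hplift _ hsK, hplift _ htK, rfl⟩) ?_
  calc dist (h ((s:ℝ):ℂ)) (h ((t:ℝ):ℂ))
      ≤ dist (h ((s:ℝ):ℂ)) (h ((u₀:ℝ):ℂ)) + dist (h ((u₀:ℝ):ℂ)) (h ((t:ℝ):ℂ)) := htri
    _ ≤ 2 * Real.arsinh 2 + 2 * Real.arsinh 2 := by
        rw [hcomm]
        exact add_le_add hds hdt
    _ = 4 * Real.arsinh 2 := by ring
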